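/- If G : [0,∞) → ℝ is differentiable with G'(t) ≤ -G(t)²/2 - 3/2 for all t, then G is not defined for all time: there is no global differentiable solution, i.e., assuming G exists on all of [0,∞) leads to a contradiction. -/

import Mathlib

/-- There is no globally defined differentiable `G : [0,∞) → ℝ` satisfying the
differential inequality `G' ≤ -G²/2 - 3/2`. -/
theorem stmt2 (G : ℝ → ℝ)
    (hdiff : ∀ t ∈ Set.Ici (0:ℝ), DifferentiableAt ℝ G t)
    (hineq : ∀ t ∈ Set.Ici (0:ℝ), deriv G t ≤ -(G t)^2/2 - 3/2) :
    False := by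
  set s : ℝ := Real.sqrt 3 with hs
  have hs2 : s ^ 2 = 3 := Real.sq_sqrt (by norm_num)
  have hspos : 0 < s := Real.sqrt_pos.mpr (by norm_num)
  set f : ℝ → ℝ := fun t => Real.arctan (G t / s) + s / 2 * t with hf
  have hder : ∀ t ∈ Set.Ici (0:ℝ), HasDerivAt f
      ((1 / (1 + (G t / s) ^ 2)) * (deriv G t / s) + s / 2) t := by
    intro t ht
    have hG : HasDerivAt G (deriv G t) t := (hdiff t ht).hasDerivAt
    have hGs : HasDerivAt (fun u => G u / s) (deriv G t / s) t := hG.div_const s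
    have h1 : HasDerivAt (fun u => Real.arctan (G u / s))
        ((1 / (1 + (G t / s) ^ 2)) * (deriv G t / s)) t :=
      by have h := (Real.hasDerivAt_arctan (G t / s)).comp t hGs; exact h
    have h2 : HasDerivAt (fun u => s / 2 * u) (s / 2) t := by
      simpa using (hasDerivAt_id t).const_mul (s / 2)
    exact h1.add h2
  have hanti : AntitoneOn f (Set.Ici 0) := by
    apply antitoneOn_of_deriv_nonpos (convex_Ici 0)
    · intro t ht
      exact ((hder t ht).differentiableAt).continuousAt.continuousWithinAt
    · intro t ht
      rw [interior_Ici] at ht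
      exact ((hder t (show (0:ℝ) ≤ t from le_of_lt ht)).differentiableAt).differentiableWithinAt
    · intro t ht
      rw [interior_Ici] at ht
      have ht' : (0:ℝ) ≤ t := le_of_lt ht
      rw [(hder t ht').deriv]
      have hd := hineq t ht'
      have hden : 0 < 1 + (G t / s) ^ 2 := by positivity
      have hgs : (G t / s) ^ 2 = (G t) ^ 2 / 3 := by
        rw [div_pow, hs2]
      rw [hgs] at hden ⊢
      have hkey : (1 / (1 + (G t) ^ 2 / 3)) * (deriv G t / s) ≤ - (s / 2) := by
        rw [div_mul_eq_mul_div, one_mul, div_le_iff₀ hden]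
        have h3s : (3:ℝ) = s * s := by nlinarith
        rw [div_le_iff₀ hspos] at *
        nlinarith [sq_nonneg (G t), sq_nonneg s, mul_pos hspos hspos]
      linarith
  have h04 : (0:ℝ) ∈ Set.Ici (0:ℝ) := Set.mem_Ici.mpr le_rfl
  have h4 : (4:ℝ) ∈ Set.Ici (0:ℝ) := by norm_num
  have hle := hanti h04 h4 (by norm_num)
  simp only [hf] at hle
  have hb1 : Real.arctan (G 4 / s) > -(Real.pi / 2) := Real.neg_pi_div_two_lt_arctan _
  have hb2 : Real.arctan (G 0 / s) < Real.pi / 2 := Real.arctan_lt_pi_div_two _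
  have hpi : Real.pi < 3.15 := Real.pi_lt_d2
  have hsgt : s > 1.7 := by
    rw [hs, show (1.7:ℝ) = Real.sqrt (1.7^2) by rw [Real.sqrt_sq]; norm_num]
    exact Real.sqrt_lt_sqrt (by norm_num) (by norm_num)
  nlinarith
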